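/- In the one-dimensional model y_n = θ* + ε_n, the implicit SGD update is θ_n = (θ_{n−1} + γ y_n)/(1 + γ), and the conditional expected increment of the Pflug statistic built from implicit gradients is Δ^im(θ) = E[g_{n+1} g_n | θ_{n−1} = θ] = (1+γ)^{-3} ((θ − θ*)² − γσ²). Hence for every learning rate γ > 0, Δ^im(θ) < 0 if and only if (θ − θ*)² < γσ², so the diagnostic region is the interval of radius σ√γ around θ* regardless of γ. -/

import Mathlib

open MeasureTheory

/-- One-dimensional model `y = θ* + ε`.  The implicit SGD
update is `θ_n = (θ_{n-1} + γ y_n)/(1+γ)`, with implicit gradient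
`g_n = (θ_{n-1} - θ_n)/γ`.  Conditional on `θ_{n-1} = θ`, with two fresh
i.i.d. noises, the expected Pflug increment is
`Δ^im(θ) = E[g_{n+1} g_n | θ_{n-1} = θ] = (1+γ)⁻³ ((θ - θ*)² - γ σ²)`;
hence for every `γ > 0`, `Δ^im(θ) < 0 ↔ (θ - θ*)² < γ σ²`. -/
theorem pflug_diagnostic_one_dim_implicit
    (ν : Measure ℝ) [IsProbabilityMeasure ν]
    (θstar σ2 γ : ℝ) (hγ : 0 < γ) (hσ2 : 0 < σ2)
    (hmean : ∫ e, e ∂ν = 0) (hvar : ∫ e, e ^ 2 ∂ν = σ2)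
    (hint1 : Integrable (fun e : ℝ => e) ν)
    (hint2 : Integrable (fun e : ℝ => e ^ 2) ν)
    -- the implicit update: θ₁(θ,e) = (θ + γ(θ*+e))/(1+γ)
    (step : ℝ → ℝ → ℝ) (hstep : ∀ θ e, step θ e = (θ + γ * (θstar + e)) / (1 + γ))
    -- Δ^im(θ) = E[g₂ g₁], g₁ = (θ - θ₁)/γ, g₂ = (θ₁ - θ₂)/γ, θ₂ = step θ₁ e₂
    (Δim : ℝ → ℝ)
    (hΔ : ∀ θ : ℝ, Δim θ =
      ∫ e₁, ∫ e₂,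
        ((step θ e₁ - step (step θ e₁) e₂) / γ) * ((θ - step θ e₁) / γ) ∂ν ∂ν) :
    (∀ θ : ℝ, Δim θ = (1 + γ) ^ (-3 : ℤ) * ((θ - θstar) ^ 2 - γ * σ2)) ∧
    (∀ θ : ℝ, Δim θ < 0 ↔ (θ - θstar) ^ 2 < γ * σ2) := by

  have hγ1 : (0:ℝ) < 1 + γ := by linarith
  have hA : (1 + γ : ℝ) ≠ 0 := ne_of_gt hγ1
  have hγ0 : γ ≠ 0 := ne_of_gt hγ
  have key : ∀ θ : ℝ, Δim θ = (1 + γ) ^ (-3 : ℤ) * ((θ - θstar) ^ 2 - γ * σ2) := by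
    intro θ
    rw [hΔ]
    have hg : ∀ x e : ℝ, (x - step x e) / γ = (x - θstar - e) / (1 + γ) := by
      intro x e; rw [hstep]; field_simp; ring
    have hinner : ∀ e₁ : ℝ,
        (∫ e₂, ((step θ e₁ - step (step θ e₁) e₂) / γ) * ((θ - step θ e₁) / γ) ∂ν)
        = ((step θ e₁ - θstar) / (1 + γ)) * ((θ - θstar - e₁) / (1 + γ)) := by
      intro e₁
      have heq : (fun e₂ => ((step θ e₁ - step (step θ e₁) e₂) / γ) * ((θ - step θ e₁) / γ))
          = fun e₂ => ((step θ e₁ - θstar) / (1 + γ)) * ((θ - θstar - e₁) / (1 + γ))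
              + (-(((θ - θstar - e₁) / (1 + γ)) / (1 + γ))) * e₂ := by
        funext e₂
        rw [hg, hg]
        field_simp
        ring
      rw [heq, integral_add (integrable_const _) (hint1.const_mul _),
        integral_const, integral_const_mul, hmean]
      simp
    simp_rw [hinner]
    have hexp : (fun e₁ : ℝ => ((step θ e₁ - θstar) / (1 + γ)) * ((θ - θstar - e₁) / (1 + γ)))
        = fun e₁ => ((θ - θstar) ^ 2 / (1 + γ) ^ 3 + ((γ - 1) * (θ - θstar) / (1 + γ) ^ 3) * e₁)
            + (-(γ / (1 + γ) ^ 3)) * e₁ ^ 2 := by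
      funext e₁; rw [hstep]; field_simp; ring
    have hi1 : Integrable (fun e₁ : ℝ => (θ - θstar) ^ 2 / (1 + γ) ^ 3
        + ((γ - 1) * (θ - θstar) / (1 + γ) ^ 3) * e₁) ν :=
      (integrable_const _).add (hint1.const_mul _)
    rw [hexp, integral_add hi1 (hint2.const_mul _),
      integral_add (integrable_const _) (hint1.const_mul _),
      integral_const, integral_const_mul, integral_const_mul, hmean, hvar]
    have h3 : ((1 + γ : ℝ)) ^ (-3 : ℤ) = 1 / (1 + γ) ^ 3 := by
      rw [zpow_neg, one_div]
      norm_num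
    rw [h3]
    simp
    field_simp
    ring
  refine ⟨key, fun θ => ?_⟩
  rw [key θ]
  have hpos : (0:ℝ) < (1 + γ) ^ (-3 : ℤ) := zpow_pos hγ1 _
  constructor
  · intro h; nlinarith
  · intro h; nlinarith
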